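/- With W ≠ 0 symmetric nonnegative and D as in the GeneRank model, for 0 < α < 1 the smallest eigenvalue of S_α = I - α D^{-1/2} W D^{-1/2} equals exactly 1 - α. -/

import Mathlib

lemma mem_spectrum_iff_exists {n : ℕ} (M : Matrix (Fin n) (Fin n) ℝ) (μ : ℝ) :
    μ ∈ spectrum ℝ M ↔ ∃ v : Fin n → ℝ, v ≠ 0 ∧ M.mulVec v = μ • v := by
  have key : ∀ v : Fin n → ℝ,
      (algebraMap ℝ (Matrix (Fin n) (Fin n) ℝ) μ - M).mulVec v = μ • v - M.mulVec v := by
    intro v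
    rw [Matrix.sub_mulVec, Algebra.algebraMap_eq_smul_one, Matrix.smul_mulVec,
      Matrix.one_mulVec]
  rw [spectrum.mem_iff, Matrix.isUnit_iff_isUnit_det, isUnit_iff_ne_zero, not_not,
      ← Matrix.exists_mulVec_eq_zero_iff]
  constructor
  · rintro ⟨v, hv, h⟩
    exact ⟨v, hv, (sub_eq_zero.mp ((key v) ▸ h)).symm⟩
  · rintro ⟨v, hv, h⟩
    exact ⟨v, hv, by rw [key v, h, sub_self]⟩

theorem stmt_6 (n : ℕ) (W : Matrix (Fin n) (Fin n) ℝ) (hW : W.IsSymm)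
    (hWnn : ∀ i j, 0 ≤ W i j) (hWne : W ≠ 0)
    (α : ℝ) (hα0 : 0 < α) (hα1 : α < 1)
    (d : Fin n → ℝ) (hd : ∀ i, d i = if 0 < ∑ j, W i j then ∑ j, W i j else 1)
    (Dhalf : Matrix (Fin n) (Fin n) ℝ)
    (hDhalf : Dhalf = Matrix.diagonal fun i => (Real.sqrt (d i))⁻¹) :
    (1 - α) ∈ spectrum ℝ ((1 : Matrix (Fin n) (Fin n) ℝ) - α • (Dhalf * W * Dhalf)) ∧
    ∀ μ ∈ spectrum ℝ ((1 : Matrix (Fin n) (Fin n) ℝ) - α • (Dhalf * W * Dhalf)),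
      1 - α ≤ μ := by
  set N := Dhalf * W * Dhalf with hNdef
  set r : Fin n → ℝ := fun i => ∑ j, W i j with hrdef
  have hWsymm : ∀ i j, W i j = W j i := fun i j => (Matrix.IsSymm.apply hW j i)
  have hr0 : ∀ i, 0 ≤ r i := fun i => Finset.sum_nonneg fun j _ => hWnn i j
  have hdpos : ∀ i, 0 < d i := by
    intro i; rw [hd i]; split
    · assumption
    · norm_num
  have hspos : ∀ i, 0 < Real.sqrt (d i) := fun i => Real.sqrt_pos.mpr (hdpos i)
  have hWler : ∀ i j, W i j ≤ r j := by
    intro i j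
    rw [hWsymm i j]
    exact Finset.single_le_sum (fun k _ => hWnn j k) (Finset.mem_univ i)
  have hWzero : ∀ i j, ¬ (0 < r j) → W i j = 0 :=
    fun i j h => le_antisymm (le_trans (hWler i j) (not_lt.mp h)) (hWnn i j)
  have hN : ∀ i j, N i j = (Real.sqrt (d i))⁻¹ * W i j * (Real.sqrt (d j))⁻¹ := by
    intro i j
    simp [hNdef, hDhalf, Matrix.mul_apply, Matrix.diagonal, Finset.sum_ite_eq,
      Finset.sum_ite_eq']
  have hNv : ∀ v : Fin n → ℝ, ∀ i, N.mulVec v i = ∑ j, N i j * v j := by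
    intro v i
    simp [Matrix.mulVec, dotProduct]
  have hmulVec : ∀ v : Fin n → ℝ,
      ((1 : Matrix (Fin n) (Fin n) ℝ) - α • N).mulVec v = v - α • N.mulVec v := by
    intro v
    rw [Matrix.sub_mulVec, Matrix.one_mulVec, Matrix.smul_mulVec]
  constructor
  · -- membership
    set y : Fin n → ℝ := fun i => if 0 < r i then Real.sqrt (d i) else 0 with hydef
    have hNy : N.mulVec y = y := by
      funext i
      rw [hNv]
      have hterm : ∀ j, N i j * y j = (Real.sqrt (d i))⁻¹ * W i j := by
        intro j
        rw [hN, hydef]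
        by_cases h : 0 < r j
        · simp only [h, if_true]
          rw [mul_assoc, inv_mul_cancel₀ (ne_of_gt (hspos j)), mul_one]
        · simp only [h, if_false, mul_zero, hWzero i j h, mul_zero, zero_mul]
      simp_rw [hterm]
      rw [← Finset.mul_sum]
      show (Real.sqrt (d i))⁻¹ * r i = y i
      by_cases h : 0 < r i
      · have hdi : d i = r i := by rw [hd i]; exact if_pos h
        rw [hydef]
        simp only [h, if_true, hdi]
        rw [← Real.mul_self_sqrt (le_of_lt h)]
        field_simp
        rw [Real.sqrt_sq (Real.sqrt_nonneg _)]
      · have : r i = 0 := le_antisymm (not_lt.mp h) (hr0 i)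
        rw [this, mul_zero, hydef]
        simp [h]
    have hyne : y ≠ 0 := by
      obtain ⟨i, j, hij⟩ : ∃ i j, W i j ≠ 0 := by
        by_contra h
        push_neg at h
        exact hWne (by ext i j; exact h i j)
      have hri : 0 < r i := lt_of_lt_of_le (lt_of_le_of_ne (hWnn i j) (Ne.symm hij))
        (Finset.single_le_sum (fun k _ => hWnn i k) (Finset.mem_univ j))
      intro h
      have := congrFun h i
      simp only [hydef, hri, if_true, Pi.zero_apply] at this
      exact (ne_of_gt (hspos i)) this
    rw [mem_spectrum_iff_exists]
    refine ⟨y, hyne, ?_⟩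
    rw [hmulVec, hNy]
    funext i
    simp only [Pi.sub_apply, Pi.smul_apply, smul_eq_mul]
    ring
  · -- lower bound
    intro μ hμ
    rw [mem_spectrum_iff_exists] at hμ
    obtain ⟨v, hv, hveq⟩ := hμ
    rw [hmulVec] at hveq
    have hptw : ∀ i, α * N.mulVec v i = (1 - μ) * v i := by
      intro i
      have := congrFun hveq i
      simp only [Pi.sub_apply, Pi.smul_apply, smul_eq_mul] at this
      linarith
    set u : Fin n → ℝ := fun i => (Real.sqrt (d i))⁻¹ * v i with hudef
    set S : ℝ := ∑ i, v i ^ 2 with hSdef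
    have hSpos : 0 < S := by
      obtain ⟨i, hi⟩ := Function.ne_iff.mp hv
      exact Finset.sum_pos' (fun j _ => sq_nonneg _)
        ⟨i, Finset.mem_univ i,
          lt_of_le_of_ne (sq_nonneg _) (Ne.symm (pow_ne_zero 2 hi))⟩
    set Q : ℝ := ∑ i, v i * N.mulVec v i with hQdef
    have hαQ : α * Q = (1 - μ) * S := by
      rw [hQdef, hSdef, Finset.mul_sum, Finset.mul_sum]
      refine Finset.sum_congr rfl fun i _ => ?_
      linear_combination v i * hptw i
    have hQform : Q = ∑ i, ∑ j, W i j * u i * u j := by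
      rw [hQdef]
      refine Finset.sum_congr rfl fun i _ => ?_
      rw [hNv, Finset.mul_sum]
      refine Finset.sum_congr rfl fun j _ => ?_
      rw [hN, hudef]
      ring
    have hvu : ∀ i, v i ^ 2 = d i * u i ^ 2 := by
      intro i
      have hs : Real.sqrt (d i) ^ 2 = d i := Real.sq_sqrt (le_of_lt (hdpos i))
      rw [hudef]
      show v i ^ 2 = d i * ((Real.sqrt (d i))⁻¹ * v i) ^ 2
      rw [← hs]
      field_simp
      rw [Real.sqrt_sq (Real.sqrt_nonneg _), mul_div_assoc, div_self (pow_ne_zero 2 (ne_of_gt (hspos i))), mul_one]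
    have hQle : Q ≤ S := by
      have step1 : 2 * Q ≤ ∑ i, ∑ j, W i j * (u i ^ 2 + u j ^ 2) := by
        rw [hQform, Finset.mul_sum]
        refine Finset.sum_le_sum fun i _ => ?_
        rw [Finset.mul_sum]
        refine Finset.sum_le_sum fun j _ => ?_
        nlinarith [mul_nonneg (hWnn i j) (sq_nonneg (u i - u j))]
      have step2 : ∑ i, ∑ j, W i j * (u i ^ 2 + u j ^ 2) = 2 * ∑ i, r i * u i ^ 2 := by
        have e1 : ∑ i, ∑ j, W i j * u i ^ 2 = ∑ i, r i * u i ^ 2 := by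
          refine Finset.sum_congr rfl fun i _ => ?_
          rw [hrdef, ← Finset.sum_mul]
        have e2 : ∑ i, ∑ j, W i j * u j ^ 2 = ∑ i, r i * u i ^ 2 := by
          rw [Finset.sum_comm]
          refine Finset.sum_congr rfl fun j _ => ?_
          rw [hrdef, ← Finset.sum_mul]
          congr 1
          exact Finset.sum_congr rfl fun i _ => hWsymm i j
        calc ∑ i, ∑ j, W i j * (u i ^ 2 + u j ^ 2)
            = (∑ i, ∑ j, W i j * u i ^ 2) + ∑ i, ∑ j, W i j * u j ^ 2 := by
              rw [← Finset.sum_add_distrib]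
              refine Finset.sum_congr rfl fun i _ => ?_
              rw [← Finset.sum_add_distrib]
              exact Finset.sum_congr rfl fun j _ => by ring
          _ = 2 * ∑ i, r i * u i ^ 2 := by rw [e1, e2]; ring
      have step3 : ∑ i, r i * u i ^ 2 ≤ S := by
        rw [hSdef]
        refine Finset.sum_le_sum fun i _ => ?_
        rw [hvu i]
        have hrd : r i ≤ d i := by
          rw [hd i]
          split
          · exact le_refl _
          · exact le_trans (not_lt.mp (by assumption)) zero_le_one
        exact mul_le_mul_of_nonneg_right hrd (sq_nonneg _)
      linarith
    nlinarith [mul_le_mul_of_nonneg_left hQle (le_of_lt hα0)]
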